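/- Let G = (V, E) be a connected graph that is 3-edge-connected, and let M* be the cographic matroid of G. Then M* is 3-sparse: for every S ⊆ E, |S| ≤ 3 · r_{M*}(S). -/

import Mathlib

open SimpleGraph Function

/-- Rank lower bound: there is a set `B ⊆ S` of at most `c - 1` edges (where `c` is the
number of connected components of `G \ S`) whose removal from `S` restores connectivity. -/
private lemma aux_rank_lb {V : Type*} [Fintype V] [DecidableEq (Sym2 V)] (G : SimpleGraph V)
    (hconn : G.Connected) :
    ∀ n : ℕ, ∀ S : Finset (Sym2 V),
      Nat.card (G.deleteEdges (↑S : Set (Sym2 V))).ConnectedComponent = n →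
      ∃ B ⊆ S, B.card + 1 ≤ n ∧ (G.deleteEdges (↑(S \ B) : Set (Sym2 V))).Connected := by
  intro n
  induction n using Nat.strong_induction_on with
  | _ n IH =>
    intro S hn
    classical
    have hneV : Nonempty V := hconn.nonempty
    by_cases hc : (G.deleteEdges (↑S : Set (Sym2 V))).Connected
    · refine ⟨∅, Finset.empty_subset S, ?_, by simpa using hc⟩
      have hne' : Nonempty (G.deleteEdges (↑S : Set (Sym2 V))).ConnectedComponent :=
        ⟨(G.deleteEdges (↑S : Set (Sym2 V))).connectedComponentMk hneV.some⟩
      have hpos : 0 < Nat.card (G.deleteEdges (↑S : Set (Sym2 V))).ConnectedComponent :=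
        Nat.card_pos
      have : 0 < n := hn ▸ hpos
      simp only [Finset.card_empty, zero_add]; omega
    · set H := G.deleteEdges (↑S : Set (Sym2 V)) with hHdef
      obtain ⟨u, v, huv⟩ : ∃ u v : V, ¬ H.Reachable u v := by
        by_contra h
        push_neg at h
        exact hc ⟨h⟩
      obtain ⟨w⟩ := hconn.preconnected u v
      obtain ⟨d, _, hdf, hds⟩ := w.exists_boundary_dart
        {x | H.connectedComponentMk x = H.connectedComponentMk u} rfl
        (fun hx => huv ((SimpleGraph.ConnectedComponent.eq.mp hx).symm))
      simp only [Set.mem_setOf_eq] at hdf hds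
      have heS : s(d.fst, d.snd) ∈ S := by
        by_contra he
        have hadj : H.Adj d.fst d.snd := by
          rw [hHdef, SimpleGraph.deleteEdges_adj]
          exact ⟨d.adj, by simpa using he⟩
        exact hds (by rw [← SimpleGraph.ConnectedComponent.connectedComponentMk_eq_of_adj hadj]; exact hdf)
      set e : Sym2 V := s(d.fst, d.snd) with hedef
      set S₁ := S.erase e with hS₁def
      have hle : H ≤ G.deleteEdges (↑S₁ : Set (Sym2 V)) :=
        SimpleGraph.deleteEdges_anti (by exact_mod_cast Finset.coe_subset.mpr (Finset.erase_subset _ _))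
      set f : H.ConnectedComponent → (G.deleteEdges (↑S₁ : Set (Sym2 V))).ConnectedComponent :=
        fun C => C.map (SimpleGraph.Hom.ofLE hle) with hfdef
      have hsurj : Surjective f := by
        intro C
        refine C.ind (fun x => ?_)
        exact ⟨H.connectedComponentMk x, rfl⟩
      have hninj : ¬ Injective f := by
        intro hinj
        have hadj1 : (G.deleteEdges (↑S₁ : Set (Sym2 V))).Adj d.fst d.snd := by
          rw [SimpleGraph.deleteEdges_adj]
          refine ⟨d.adj, ?_⟩
          simp [hS₁def, hedef]
        have : f (H.connectedComponentMk d.fst) = f (H.connectedComponentMk d.snd) := by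
          simp only [hfdef, SimpleGraph.ConnectedComponent.map_mk]
          exact SimpleGraph.ConnectedComponent.connectedComponentMk_eq_of_adj hadj1
        have := hinj this
        rw [this] at hdf
        exact hds hdf
      set m := Nat.card (G.deleteEdges (↑S₁ : Set (Sym2 V))).ConnectedComponent with hmdef
      have hmn : m < n := by
        have h1 : m ≤ n := by
          rw [← hn, hmdef]
          exact Nat.card_le_card_of_surjective f hsurj
        rcases lt_or_eq_of_le h1 with h | h
        · exact h
        · exfalso
          exact hninj (hsurj.bijective_of_nat_card_le (by omega)).injective
      obtain ⟨B₁, hB₁S₁, hB₁c, hB₁conn⟩ := IH m hmn S₁ rfl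
      have heB₁ : e ∉ B₁ := fun h => (Finset.notMem_erase e S) (hB₁S₁ h)
      refine ⟨insert e B₁, ?_, ?_, ?_⟩
      · exact Finset.insert_subset heS (hB₁S₁.trans (Finset.erase_subset _ _))
      · rw [Finset.card_insert_of_notMem heB₁]
        omega
      · have : S \ insert e B₁ = S₁ \ B₁ := by
          ext x
          simp only [Finset.mem_sdiff, Finset.mem_insert, hS₁def, Finset.mem_erase]
          tauto
        rw [this]
        exact hB₁conn

/-- Counting bound: if `G` is 3-edge-connected and `G \ S` has `c ≥ 2` components,
then `3c ≤ 2|S|`. -/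
private lemma aux_count {V : Type*} [Fintype V] (G : SimpleGraph V) (hconn : G.Connected)
    (h3ec : ∀ e₁ e₂ : Sym2 V, (G.deleteEdges {e₁, e₂}).Connected)
    (S : Finset (Sym2 V))
    (hc2 : 2 ≤ Nat.card (G.deleteEdges (↑S : Set (Sym2 V))).ConnectedComponent) :
    3 * Nat.card (G.deleteEdges (↑S : Set (Sym2 V))).ConnectedComponent ≤ 2 * S.card := by
  classical
  set H := G.deleteEdges (↑S : Set (Sym2 V)) with hHdef
  have hneV : Nonempty V := hconn.nonempty
  have : Fintype H.ConnectedComponent := Fintype.ofFinite _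
  set P : Sym2 V → H.ConnectedComponent → Prop := fun e K =>
    ∃ a b : V, e = s(a, b) ∧ H.connectedComponentMk a = K ∧ H.connectedComponentMk b ≠ K
    with hPdef
  -- every component has at least 3 boundary edges, all in S
  have hbound : ∀ K : H.ConnectedComponent, 3 ≤ (S.filter (fun e => P e K)).card := by
    intro K
    by_contra hlt
    push_neg at hlt
    have hT2 : (S.filter (fun e => P e K)).card ≤ 2 := by omega
    set T := S.filter (fun e => P e K) with hTdef
    obtain ⟨e₁, e₂, hT⟩ : ∃ e₁ e₂ : Sym2 V, ∀ x ∈ T, x = e₁ ∨ x = e₂ := by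
      obtain ⟨x₀⟩ := hneV
      rcases T.eq_empty_or_nonempty with he | ⟨a, ha⟩
      · exact ⟨s(x₀, x₀), s(x₀, x₀), by simp [he]⟩
      · rcases (T.erase a).eq_empty_or_nonempty with he | ⟨b, hb⟩
        · refine ⟨a, a, fun x hx => Or.inl ?_⟩
          by_contra hxa
          have : x ∈ T.erase a := Finset.mem_erase.mpr ⟨hxa, hx⟩
          simp [he] at this
        · refine ⟨a, b, fun x hx => ?_⟩
          by_contra hxx
          push_neg at hxx
          have hba : b ≠ a := (Finset.mem_erase.mp hb).1
          have hbT : b ∈ T := Finset.mem_of_mem_erase hb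
          have hsub : ({x, a, b} : Finset (Sym2 V)) ⊆ T := by
            intro y hy
            simp only [Finset.mem_insert, Finset.mem_singleton] at hy
            rcases hy with rfl | rfl | rfl
            · exact hx
            · exact ha
            · exact hbT
          have h3 : ({x, a, b} : Finset (Sym2 V)).card = 3 := by
            rw [Finset.card_insert_of_notMem (by simp [hxx.1, hxx.2]),
              Finset.card_insert_of_notMem (by simp [Ne.symm hba]), Finset.card_singleton]
          have := Finset.card_le_card hsub
          omega
    -- the graph with e₁, e₂ deleted is connected, contradiction
    obtain ⟨u, hu⟩ := K.exists_rep
    have hu' : H.connectedComponentMk u = K := hu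
    obtain ⟨K', hK'⟩ := Fintype.exists_ne_of_one_lt_card
      (by rw [← Nat.card_eq_fintype_card]; omega) K
    obtain ⟨v, hv⟩ := K'.exists_rep
    have hv' : H.connectedComponentMk v = K' := hv
    have hvK : H.connectedComponentMk v ≠ K := by rw [hv']; exact hK'
    obtain ⟨w⟩ := (h3ec e₁ e₂).preconnected u v
    obtain ⟨d, _, hdf, hds⟩ := w.exists_boundary_dart {x | H.connectedComponentMk x = K}
      (by exact hu') (by exact hvK)
    simp only [Set.mem_setOf_eq] at hdf hds
    have hadj : (G.deleteEdges {e₁, e₂}).Adj d.fst d.snd := d.adj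
    rw [SimpleGraph.deleteEdges_adj] at hadj
    obtain ⟨hGadj, hne12⟩ := hadj
    have heS : s(d.fst, d.snd) ∈ S := by
      by_contra he
      have hadjH : H.Adj d.fst d.snd := by
        rw [hHdef, SimpleGraph.deleteEdges_adj]
        exact ⟨hGadj, by simpa using he⟩
      exact hds (by rw [← SimpleGraph.ConnectedComponent.connectedComponentMk_eq_of_adj hadjH]; exact hdf)
    have heT : s(d.fst, d.snd) ∈ T := by
      rw [hTdef, Finset.mem_filter]
      exact ⟨heS, d.fst, d.snd, rfl, hdf, hds⟩
    rcases hT _ heT with h | h <;> simp [h] at hne12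
  -- double counting: each edge crosses at most two components
  have hcross : ∀ e ∈ S, (Finset.univ.filter (fun K => P e K)).card ≤ 2 := by
    intro e _
    induction e using Sym2.ind with
    | _ a b =>
      have hsub : (Finset.univ.filter (fun K => P s(a, b) K)) ⊆
          {H.connectedComponentMk a, H.connectedComponentMk b} := by
        intro K hK
        rw [Finset.mem_filter] at hK
        obtain ⟨_, a', b', hab, ha', _⟩ := hK
        rw [Sym2.eq_iff] at hab
        simp only [Finset.mem_insert, Finset.mem_singleton]
        rcases hab with ⟨rfl, rfl⟩ | ⟨rfl, rfl⟩
        · exact Or.inl ha'.symm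
        · exact Or.inr ha'.symm
      exact (Finset.card_le_card hsub).trans Finset.card_le_two
  have hswap : ∑ K : H.ConnectedComponent, (S.filter (fun e => P e K)).card
      = ∑ e ∈ S, (Finset.univ.filter (fun K => P e K)).card := by
    simp_rw [Finset.card_filter]
    exact Finset.sum_comm
  have h1 : 3 * Nat.card H.ConnectedComponent
      ≤ ∑ K : H.ConnectedComponent, (S.filter (fun e => P e K)).card := by
    rw [Nat.card_eq_fintype_card, ← Finset.card_univ]
    calc 3 * Finset.univ.card = ∑ _K : H.ConnectedComponent, 3 := by
          rw [Finset.sum_const, smul_eq_mul, mul_comm]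
      _ ≤ _ := Finset.sum_le_sum (fun K _ => hbound K)
  have h2 : ∑ e ∈ S, (Finset.univ.filter (fun K => P e K)).card ≤ 2 * S.card := by
    calc ∑ e ∈ S, (Finset.univ.filter (fun K => P e K)).card
        ≤ ∑ _e ∈ S, 2 := Finset.sum_le_sum hcross
      _ = 2 * S.card := by rw [Finset.sum_const, smul_eq_mul, mul_comm]
  omega

open Classical in
/-- Let `G` be a connected, 3-edge-connected graph and `M*` its cographic matroid
(a set `A` of edges is independent iff deleting `A` keeps `G` connected).  Then `M*`
is `3`-sparse: `|S| ≤ 3 · r_{M*}(S)` for every edge set `S`. -/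
theorem stmt_3 {V : Type*} [Fintype V] (G : SimpleGraph V) (hconn : G.Connected)
    (h3ec : ∀ e₁ e₂ : Sym2 V, (G.deleteEdges {e₁, e₂}).Connected)
    (r : Finset (Sym2 V) → ℕ)
    (hr : ∀ S : Finset (Sym2 V),
      r S = (S.powerset.filter (fun A : Finset (Sym2 V) => (G.deleteEdges (↑A : Set (Sym2 V))).Connected)).sup Finset.card) :
    ∀ S : Finset (Sym2 V), (↑S : Set (Sym2 V)) ⊆ G.edgeSet → S.card ≤ 3 * r S := by
  intro S _
  classical
  obtain ⟨B, hBS, hBc, hBconn⟩ := aux_rank_lb G hconn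
    (Nat.card (G.deleteEdges (↑S : Set (Sym2 V))).ConnectedComponent) S rfl
  have hr' : (S \ B).card ≤ r S := by
    rw [hr]
    refine Finset.le_sup ?_
    simp only [Finset.mem_filter, Finset.mem_powerset]
    exact ⟨Finset.sdiff_subset, hBconn⟩
  have hcard : (S \ B).card = S.card - B.card := Finset.card_sdiff_of_subset hBS
  have hBle : B.card ≤ S.card := Finset.card_le_card hBS
  have h3B : 3 * B.card ≤ 2 * S.card := by
    rcases le_or_gt (Nat.card (G.deleteEdges (↑S : Set (Sym2 V))).ConnectedComponent) 1
      with h1 | h2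
    · omega
    · have := aux_count G hconn h3ec S h2
      omega
  omega
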